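/- Let (G,m,w,B) be a connected weighted finite graph with boundary. Suppose there is a nonnegative function ρ : Ω → ℝ with w_{xy} = ρ_y m_x m_y for every x ∈ B and y ∈ Ω, and suppose μ₂(Ω) ≥ Deg − V_B·ρ_min + (V_G/Deg)·⟨ρ,ρ⟩_Ω, where μ₂(Ω) is the second smallest Laplacian eigenvalue of the induced weighted graph G|_Ω (with measure m and weight w restricted to Ω), Deg := ⟨ρ,1⟩_Ω, ρ_min = min_{y∈Ω} ρ_y, V_B = Σ_{x∈B} m_x, V_Ω = Σ_{y∈Ω} m_y, V_G = V_B + V_Ω. Then σ_i = μ_i for all i = 1, 2, …, |B|. -/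

import Mathlib

open Finset Real

namespace GraphSteklov

variable {V : Type*} [Fintype V] [DecidableEq V]

/-- The weighted graph Laplacian: `Δu(x) = (1/m_x) Σ_y (u(y)-u(x)) w_{xy}`. -/
noncomputable def lap (m : V → ℝ) (w : V → V → ℝ) (u : V → ℝ) (x : V) : ℝ :=
  (1 / m x) * ∑ y, (u y - u x) * w x y

/-- Weighted inner product of two functions over a finite set `S` of vertices:
`⟨u,v⟩_S = Σ_{x ∈ S} u(x) v(x) m_x`. -/
def iprodOn (m : V → ℝ) (S : Finset V) (u v : V → ℝ) : ℝ :=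
  ∑ x ∈ S, u x * v x * m x

/-- Full weighted inner product `⟨u,v⟩ = Σ_{x ∈ V} u(x) v(x) m_x`. -/
def iprod (m : V → ℝ) (u v : V → ℝ) : ℝ := ∑ x, u x * v x * m x

/-- `(G,m,w)` is a weighted graph: positive vertex measure, symmetric edge weight,
positive exactly on edges. -/
def IsWeight (G : SimpleGraph V) (m : V → ℝ) (w : V → V → ℝ) : Prop :=
  (∀ x, 0 < m x) ∧ (∀ x y, w x y = w y x) ∧
  (∀ x y, G.Adj x y → 0 < w x y) ∧ (∀ x y, ¬ G.Adj x y → w x y = 0)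

/-- `B` is a vertex-boundary of `G`: no two boundary vertices are adjacent, and every
boundary vertex is adjacent to some interior vertex. -/
def IsBoundary (G : SimpleGraph V) (B : Finset V) : Prop :=
  (∀ x ∈ B, ∀ y ∈ B, ¬ G.Adj x y) ∧ (∀ x ∈ B, ∃ y, y ∉ B ∧ G.Adj x y)

/-- `μ` is the nondecreasing sequence of eigenvalues (with multiplicity) of `-Δ`,
witnessed by an orthonormal (w.r.t. the measure `m`) basis of eigenfunctions. -/
def IsLapSpectrum (m : V → ℝ) (w : V → V → ℝ) (μ : Fin (Fintype.card V) → ℝ) : Prop :=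
  Monotone μ ∧ ∃ v : Fin (Fintype.card V) → V → ℝ,
    (∀ i x, - lap m w (v i) x = μ i * v i x) ∧
    (∀ i j, iprod m (v i) (v j) = if i = j then 1 else 0)

/-- `σ` is the nondecreasing sequence of Steklov eigenvalues (with multiplicity) of
the Dirichlet-to-Neumann map of `(G,m,w,B)`: it is witnessed by a family of functions,
harmonic in the interior, whose restrictions to `B` are orthonormal w.r.t. `⟨·,·⟩_B`
and whose normal derivatives `∂u/∂n = -Δu` on `B` satisfy the eigenvalue equations. -/
def IsSteklovSpectrum (m : V → ℝ) (w : V → V → ℝ) (B : Finset V)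
    (σ : Fin B.card → ℝ) : Prop :=
  Monotone σ ∧ ∃ u : Fin B.card → V → ℝ,
    (∀ i y, y ∉ B → lap m w (u i) y = 0) ∧
    (∀ i x, x ∈ B → - lap m w (u i) x = σ i * u i x) ∧
    (∀ i j, iprodOn m B (u i) (u j) = if i = j then 1 else 0)

/-- `Mu2LB m w S c` says that the second smallest Laplacian eigenvalue `μ₂` of the induced
weighted graph on `S` is `≥ c`, expressed via the variational characterization
`μ₂(S) = min { ⟨du,du⟩_S / ⟨u,u⟩_S : u ≠ 0, ⟨u,1⟩_S = 0 }`. -/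
def Mu2LB (m : V → ℝ) (w : V → V → ℝ) (S : Finset V) (c : ℝ) : Prop :=
  ∀ u : V → ℝ, (∑ y ∈ S, u y * m y) = 0 →
    c * (∑ y ∈ S, u y ^ 2 * m y) ≤ (1 / 2) * ∑ x ∈ S, ∑ y ∈ S, (u y - u x) ^ 2 * w x y

/-- The carré du champ operator `Γ(f,g) = ½(Δ(fg) - fΔg - gΔf)`. -/
noncomputable def gammaOp (m : V → ℝ) (w : V → V → ℝ) (f g : V → ℝ) (x : V) : ℝ :=
  (lap m w (f * g) x - f x * lap m w g x - g x * lap m w f x) / 2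

/-- The iterated carré du champ operator `Γ₂(f,f) = ½ΔΓ(f,f) - Γ(f,Δf)`. -/
noncomputable def gamma2Op (m : V → ℝ) (w : V → V → ℝ) (f : V → ℝ) (x : V) : ℝ :=
  (lap m w (gammaOp m w f f) x) / 2 - gammaOp m w f (lap m w f) x

/-- Edge connectivity: the least number of edges whose deletion disconnects `G`. -/
noncomputable def edgeConn (G : SimpleGraph V) : ℕ :=
  sInf {n | ∃ F : Finset (Sym2 V), ↑F ⊆ G.edgeSet ∧ F.card = n ∧
    ¬ (G.deleteEdges ↑F).Connected}

/-- Vertex connectivity: the least number of vertices whose deletion disconnects `G`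
(with the convention `v(K_n) = n - 1`, realized by allowing deletions leaving at most
one vertex). -/
noncomputable def vertConn (G : SimpleGraph V) : ℕ :=
  sInf {n | ∃ S : Finset V, S.card = n ∧
    (¬ (G.induce (↑(Sᶜ : Finset V) : Set V)).Connected ∨ (Sᶜ : Finset V).card ≤ 1)}

/-- Edge weights of the weighted path on `Fin n` (vertices `0,…,n-1`), where all edges
have weight `1` except the edge incident to the vertex `0`, which has weight `lam`. -/
def pathW (lam : ℝ) {n : ℕ} (a b : Fin n) : ℝ :=
  if a.val + 1 = b.val ∨ b.val + 1 = a.val then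
    (if a.val = 0 ∨ b.val = 0 then lam else 1) else 0

/-- The Laplacian (with unit vertex measure) of the weighted path `pathW lam`. -/
noncomputable def pathLap (lam : ℝ) {n : ℕ} (u : Fin n → ℝ) (a : Fin n) : ℝ :=
  ∑ b, (u b - u a) * pathW lam a b

/-- The largest Laplacian eigenvalue of the path `P_i` on `i` vertices with unit weight. -/
noncomputable def pathTopEig (i : ℕ) : ℝ :=
  sSup {r | ∃ u : Fin i → ℝ, u ≠ 0 ∧ ∀ a, - pathLap 1 u a = r * u a}

/-- `𝒫(k,λ)`: the first Dirichlet eigenvalue of the path with vertices `0,1,…,k`, unit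
vertex measure, edge weights `w_{01} = λ` and `w_{j,j+1} = 1` for `j ≥ 1`, and boundary
vertex `0`: the smallest eigenvalue of `-Δ` on functions vanishing at `0`. -/
noncomputable def pathDirichlet (k : ℕ) (lam : ℝ) : ℝ :=
  sInf {r | ∃ u : Fin (k + 1) → ℝ, u ≠ 0 ∧ u 0 = 0 ∧
    ∀ a : Fin (k + 1), a.val ≠ 0 → - pathLap lam u a = r * u a}

set_option linter.unusedSectionVars false

section Infra

variable {m : V → ℝ} {w : V → V → ℝ}

lemma sum_antisym {f : V → V → ℝ} (h : ∀ x y, f x y = - f y x) :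
    ∑ x, ∑ y, f x y = 0 := by
  have h2 : ∑ x, ∑ y, f x y = ∑ x, ∑ y, f y x := Finset.sum_comm
  have h3 : ∑ x, ∑ y, f y x = - ∑ x, ∑ y, f x y := by
    rw [← Finset.sum_neg_distrib]
    exact Finset.sum_congr rfl fun x _ => by
      rw [← Finset.sum_neg_distrib]
      exact Finset.sum_congr rfl fun y _ => by rw [h]
  linarith [h2, h3 ▸ h2]

lemma sum_lap_zero (hm : ∀ x, 0 < m x) (hs : ∀ x y, w x y = w y x) (u : V → ℝ) :
    ∑ x, lap m w u x * m x = 0 := by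
  have : ∀ x, lap m w u x * m x = ∑ y, (u y - u x) * w x y := by
    intro x
    have := (hm x).ne'
    rw [lap, one_div, inv_mul_eq_div, div_mul_cancel₀ _ this]
  rw [Finset.sum_congr rfl fun x _ => this x]
  exact sum_antisym fun x y => by rw [hs]; ring

lemma green (hm : ∀ x, 0 < m x) (hs : ∀ x y, w x y = w y x) (u g : V → ℝ) :
    ∑ x, (- lap m w u x) * g x * m x
      = (1/2) * ∑ x, ∑ y, (u y - u x) * (g y - g x) * w x y := by
  have h1 : ∀ x, (- lap m w u x) * g x * m x = - ∑ y, (u y - u x) * g x * w x y := by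
    intro x
    have hx : m x ≠ 0 := (hm x).ne'
    rw [lap, show ∑ y, (u y - u x) * g x * w x y = (∑ y, (u y - u x) * w x y) * g x from by
      rw [Finset.sum_mul]; exact Finset.sum_congr rfl fun y _ => by ring]
    field_simp
  rw [Finset.sum_congr rfl fun x _ => h1 x]
  have key : ∑ x, ∑ y, ((u y - u x) * (g y - g x) * w x y + 2 * ((u y - u x) * g x * w x y)) = 0 := by
    apply sum_antisym
    intro x y
    rw [hs]
    ring
  have expand : ∑ x, ∑ y, ((u y - u x) * (g y - g x) * w x y + 2 * ((u y - u x) * g x * w x y))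
      = (∑ x, ∑ y, (u y - u x) * (g y - g x) * w x y)
        + 2 * ∑ x, ∑ y, (u y - u x) * g x * w x y := by
    rw [Finset.mul_sum, ← Finset.sum_add_distrib]
    refine Finset.sum_congr rfl fun x _ => ?_
    rw [Finset.mul_sum, ← Finset.sum_add_distrib]
  rw [expand] at key
  have : ∑ x, -∑ y, (u y - u x) * g x * w x y = - ∑ x, ∑ y, (u y - u x) * g x * w x y := by
    rw [← Finset.sum_neg_distrib]
  rw [this]
  linarith

lemma energy_eq (hm : ∀ x, 0 < m x) (hs : ∀ x y, w x y = w y x) (u : V → ℝ) :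
    ∑ x, (- lap m w u x) * u x * m x
      = (1/2) * ∑ x, ∑ y, (u y - u x) ^ 2 * w x y := by
  rw [green hm hs u u]
  congr 1
  exact Finset.sum_congr rfl fun x _ => Finset.sum_congr rfl fun y _ => by ring

lemma selfadj (hm : ∀ x, 0 < m x) (hs : ∀ x y, w x y = w y x) (u g : V → ℝ) :
    ∑ x, (- lap m w u x) * g x * m x = ∑ x, (- lap m w g x) * u x * m x := by
  rw [green hm hs u g, green hm hs g u]
  congr 1
  exact Finset.sum_congr rfl fun x _ => Finset.sum_congr rfl fun y _ => by ring

lemma w_nonneg {G : SimpleGraph V} (hW : IsWeight G m w) (x y : V) : 0 ≤ w x y := by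
  by_cases h : G.Adj x y
  · exact (hW.2.2.1 x y h).le
  · rw [hW.2.2.2 x y h]

lemma const_of_energy_zero {G : SimpleGraph V} (hG : G.Connected) (hW : IsWeight G m w)
    (u : V → ℝ) (hE : ∑ x, ∑ y, (u y - u x) ^ 2 * w x y = 0) :
    ∀ x y, u x = u y := by
  have hterm : ∀ x ∈ (univ : Finset V), ∀ y ∈ (univ : Finset V),
      (u y - u x) ^ 2 * w x y = 0 := by
    have h1 : ∀ x ∈ (univ : Finset V), (0:ℝ) ≤ ∑ y, (u y - u x) ^ 2 * w x y :=
      fun x _ => Finset.sum_nonneg fun y _ => mul_nonneg (sq_nonneg _) (w_nonneg hW x y)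
    have h2 := (Finset.sum_eq_zero_iff_of_nonneg h1).mp hE
    intro x hx y hy
    exact (Finset.sum_eq_zero_iff_of_nonneg
      (fun y _ => mul_nonneg (sq_nonneg _) (w_nonneg hW x y))).mp (h2 x hx) y hy
  have hadj : ∀ x y, G.Adj x y → u x = u y := by
    intro x y h
    have := hterm x (mem_univ x) y (mem_univ y)
    have hw := hW.2.2.1 x y h
    have : (u y - u x) ^ 2 = 0 := by
      by_contra hne
      exact hne (by
        rcases mul_eq_zero.mp this with h' | h'
        · exact h'
        · exact absurd h' hw.ne')
    have := pow_eq_zero_iff (n := 2) (by norm_num) |>.mp this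
    linarith [sub_eq_zero.mp this]
  intro x y
  obtain ⟨p⟩ := hG.preconnected x y
  induction p with
  | nil => rfl
  | cons h p ih => exact (hadj _ _ h).trans ih

lemma lap_boundary {G : SimpleGraph V} {B : Finset V} {ρ : V → ℝ}
    (hW : IsWeight G m w) (hB : IsBoundary G B)
    (hsplit : ∀ x ∈ B, ∀ y, y ∉ B → w x y = ρ y * m x * m y)
    {x : V} (hx : x ∈ B) (u : V → ℝ) :
    lap m w u x = (∑ y ∈ Bᶜ, u y * (ρ y * m y)) - u x * (∑ y ∈ Bᶜ, ρ y * m y) := by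
  have hm := hW.1
  have hx0 : m x ≠ 0 := (hm x).ne'
  rw [lap]
  have hsplitsum : ∑ y, (u y - u x) * w x y
      = ∑ y ∈ B, (u y - u x) * w x y + ∑ y ∈ Bᶜ, (u y - u x) * w x y :=
    (Finset.sum_add_sum_compl B _).symm
  have hBzero : ∑ y ∈ B, (u y - u x) * w x y = 0 := by
    refine Finset.sum_eq_zero fun y hy => ?_
    have : w x y = 0 := by
      by_cases hadj : G.Adj x y
      · exact absurd hadj (hB.1 x hx y hy)
      · exact hW.2.2.2 x y hadj
    rw [this, mul_zero]
  have hBc : ∑ y ∈ Bᶜ, (u y - u x) * w x y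
      = m x * ∑ y ∈ Bᶜ, (u y - u x) * (ρ y * m y) := by
    rw [Finset.mul_sum]
    refine Finset.sum_congr rfl fun y hy => ?_
    rw [hsplit x hx y (Finset.mem_compl.mp hy)]
    ring
  rw [hsplitsum, hBzero, hBc]
  rw [show ∑ y ∈ Bᶜ, (u y - u x) * (ρ y * m y)
      = (∑ y ∈ Bᶜ, u y * (ρ y * m y)) - u x * (∑ y ∈ Bᶜ, ρ y * m y) from by
    rw [Finset.mul_sum, ← Finset.sum_sub_distrib]
    exact Finset.sum_congr rfl fun y _ => by ring]
  field_simp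
  ring

lemma lap_const_zero (m : V → ℝ) (w : V → V → ℝ) (t : ℝ) (x : V) :
    lap m w (fun _ => t) x = 0 := by
  simp [lap]

lemma harmonic_const {G : SimpleGraph V} {B : Finset V}
    (hG : G.Connected) (hW : IsWeight G m w) (hBne : B.Nonempty)
    (h : V → ℝ) (hharm : ∀ y, y ∉ B → lap m w h y = 0)
    (t : ℝ) (hbd : ∀ x ∈ B, h x = t) : ∀ z, h z = t := by
  have hm := hW.1
  have hs := hW.2.1
  have hgreen := green hm hs h (fun z => h z - t)
  have hLHS : ∑ x, (- lap m w h x) * (h x - t) * m x = 0 := by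
    refine Finset.sum_eq_zero fun x _ => ?_
    by_cases hxB : x ∈ B
    · rw [hbd x hxB]; ring
    · rw [hharm x hxB]; ring
  rw [hLHS] at hgreen
  have hE : ∑ x, ∑ y, (h y - h x) ^ 2 * w x y = 0 := by
    have : ∑ x, ∑ y, (h y - h x) * ((h y - t) - (h x - t)) * w x y
        = ∑ x, ∑ y, (h y - h x) ^ 2 * w x y :=
      Finset.sum_congr rfl fun x _ => Finset.sum_congr rfl fun y _ => by ring
    linarith [this ▸ hgreen]
  have hc := const_of_energy_zero hG hW h hE
  intro z
  obtain ⟨x0, hx0⟩ := hBne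
  rw [hc z x0, hbd x0 hx0]

lemma sum_comb3 (S : Finset V) (F G H L : V → ℝ) (α β γ : ℝ)
    (h : ∀ y ∈ S, F y = α * G y + β * H y + γ * L y) :
    ∑ y ∈ S, F y = α * (∑ y ∈ S, G y) + β * (∑ y ∈ S, H y) + γ * (∑ y ∈ S, L y) := by
  rw [Finset.mul_sum, Finset.mul_sum, Finset.mul_sum, ← Finset.sum_add_distrib,
    ← Finset.sum_add_distrib]
  exact Finset.sum_congr rfl h

lemma rayleigh {G : SimpleGraph V} {B : Finset V} {ρ : V → ℝ}
    (hW : IsWeight G m w) (hB : IsBoundary G B)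
    (hρ : ∀ y, y ∉ B → 0 ≤ ρ y)
    (hsplit : ∀ x ∈ B, ∀ y, y ∉ B → w x y = ρ y * m x * m y)
    (hne : (Bᶜ : Finset V).Nonempty) (hBne : B.Nonempty)
    (hmu2 : Mu2LB m w Bᶜ
      ((∑ y ∈ Bᶜ, ρ y * m y) - (∑ x ∈ B, m x) * ((Bᶜ : Finset V).inf' hne ρ)
        + (((∑ x ∈ B, m x) + ∑ y ∈ Bᶜ, m y) / (∑ y ∈ Bᶜ, ρ y * m y))
            * (∑ y ∈ Bᶜ, ρ y ^ 2 * m y)))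
    (v : V → ℝ) (a : ℝ) (hva : ∀ x ∈ B, v x = a)
    (hsum : ∑ x, v x * m x = 0) :
    (∑ y ∈ Bᶜ, ρ y * m y) * (∑ x, v x ^ 2 * m x)
      ≤ (1/2) * ∑ x, ∑ y, (v y - v x) ^ 2 * w x y := by
  have hm := hW.1
  have hws := hW.2.1
  set D : ℝ := ∑ y ∈ Bᶜ, ρ y * m y with hDdef
  set VB : ℝ := ∑ x ∈ B, m x with hVBdef
  set VΩ : ℝ := ∑ y ∈ Bᶜ, m y with hVΩdef
  set r : ℝ := (Bᶜ : Finset V).inf' hne ρ with hrdef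
  set D2 : ℝ := ∑ y ∈ Bᶜ, ρ y ^ 2 * m y with hD2def
  have hVB : 0 < VB := Finset.sum_pos (fun x _ => hm x) hBne
  have hVΩ : 0 < VΩ := Finset.sum_pos (fun x _ => hm x) hne
  have hρc : ∀ y ∈ (Bᶜ : Finset V), 0 ≤ ρ y := fun y hy => hρ y (Finset.mem_compl.mp hy)
  have hD : 0 < D := by
    obtain ⟨x0, hx0⟩ := hBne
    obtain ⟨y0, hy0B, hadj⟩ := hB.2 x0 hx0
    have hw0 : 0 < w x0 y0 := hW.2.2.1 _ _ hadj
    have heq := hsplit x0 hx0 y0 hy0B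
    have hρy0 : 0 < ρ y0 := by
      rcases lt_or_eq_of_le (hρ y0 hy0B) with h | h
      · exact h
      · rw [heq, ← h] at hw0; simp at hw0
    refine Finset.sum_pos' (fun y hy => mul_nonneg (hρc y hy) (hm y).le) ?_
    exact ⟨y0, Finset.mem_compl.mpr hy0B, mul_pos hρy0 (hm y0)⟩
  have hr0 : 0 ≤ r := by
    obtain ⟨y1, hy1, hr1⟩ := Finset.exists_mem_eq_inf' hne ρ
    rw [hrdef, hr1]
    exact hρc y1 hy1
  set S1 : ℝ := ∑ y ∈ Bᶜ, v y * m y with hS1def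
  set c : ℝ := S1 / VΩ with hcdef0
  have hcdef : c * VΩ = S1 := by rw [hcdef0]; field_simp
  set K : ℝ := ∑ y ∈ Bᶜ, (v y - c) ^ 2 * m y with hKdef
  set Qc : ℝ := ∑ y ∈ Bᶜ, (v y - c) ^ 2 * (ρ y * m y) with hQcdef
  set P : ℝ := ∑ y ∈ Bᶜ, (v y - c) * (ρ y * m y) with hPdef
  set T : ℝ := ∑ y ∈ Bᶜ, v y ^ 2 * m y with hTdef
  have hsum' : a * VB + S1 = 0 := by
    rw [← hsum, ← Finset.sum_add_sum_compl B (fun x => v x * m x)]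
    rw [hVBdef, Finset.mul_sum, hS1def]
    congr 1
    exact Finset.sum_congr rfl fun x hx => by rw [hva x hx]
  have hconv : c * VΩ = -(a * VB) := by rw [hcdef]; linarith
  have htot : ∑ x, v x ^ 2 * m x = a ^ 2 * VB + T := by
    rw [← Finset.sum_add_sum_compl B (fun x => v x ^ 2 * m x)]
    congr 1
    rw [hVBdef, Finset.mul_sum]
    exact Finset.sum_congr rfl fun x hx => by rw [hva x hx]
  have hKT : K = 1 * T + (-(2*c)) * S1 + c ^ 2 * VΩ := by
    rw [hKdef, hTdef, hS1def, hVΩdef]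
    exact sum_comb3 _ _ _ _ _ _ _ _ (fun y _ => by ring)
  have hT' : T = K + c ^ 2 * VΩ := by
    have hcs : c * S1 = c ^ 2 * VΩ := by rw [← hcdef]; ring
    nlinarith [hKT, hcs]
  set I : ℝ := ∑ x ∈ Bᶜ, ∑ y ∈ Bᶜ, (v y - v x) ^ 2 * w x y with hIdef
  set CΩ : ℝ := ∑ y ∈ Bᶜ, (v y - a) ^ 2 * (ρ y * m y) with hCΩdef
  have hEsplit : ∑ x, ∑ y, (v y - v x) ^ 2 * w x y = 2 * (VB * CΩ) + I := by
    rw [← Finset.sum_add_sum_compl B (fun x => ∑ y, (v y - v x) ^ 2 * w x y)]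
    have hBpart : ∑ x ∈ B, ∑ y, (v y - v x) ^ 2 * w x y = VB * CΩ := by
      rw [hVBdef, Finset.sum_mul]
      refine Finset.sum_congr rfl fun x hx => ?_
      rw [← Finset.sum_add_sum_compl B (fun y => (v y - v x) ^ 2 * w x y)]
      have h0 : ∑ y ∈ B, (v y - v x) ^ 2 * w x y = 0 := by
        refine Finset.sum_eq_zero fun y hy => ?_
        have hwz : w x y = 0 := by
          by_cases hadj : G.Adj x y
          · exact absurd hadj (hB.1 x hx y hy)
          · exact hW.2.2.2 x y hadj
        rw [hwz, mul_zero]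
      rw [h0, zero_add, hCΩdef, Finset.mul_sum]
      refine Finset.sum_congr rfl fun y hy => ?_
      rw [hsplit x hx y (Finset.mem_compl.mp hy), hva x hx]
      ring
    have hΩpart : ∑ x ∈ Bᶜ, ∑ y, (v y - v x) ^ 2 * w x y = VB * CΩ + I := by
      rw [hIdef, hCΩdef, Finset.mul_sum, ← Finset.sum_add_distrib]
      refine Finset.sum_congr rfl fun x hx => ?_
      rw [← Finset.sum_add_sum_compl B (fun y => (v y - v x) ^ 2 * w x y)]
      congr 1
      rw [hVBdef, Finset.sum_mul]
      refine Finset.sum_congr rfl fun y hy => ?_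
      rw [hws x y, hsplit y hy x (Finset.mem_compl.mp hx), hva y hy]
      ring
    rw [hBpart, hΩpart]
    ring
  have hCΩexp : CΩ = 1 * Qc + (2*(c-a)) * P + (c-a) ^ 2 * D := by
    rw [hCΩdef, hQcdef, hPdef, hDdef]
    exact sum_comb3 _ _ _ _ _ _ _ _ (fun y _ => by ring)
  have hQ : r * K ≤ Qc := by
    have hdiff : Qc - r * K = ∑ y ∈ Bᶜ, (ρ y - r) * ((v y - c) ^ 2 * m y) := by
      rw [hQcdef, hKdef, Finset.mul_sum, ← Finset.sum_sub_distrib]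
      exact Finset.sum_congr rfl fun y _ => by ring
    have hnn : 0 ≤ Qc - r * K := by
      rw [hdiff]
      exact Finset.sum_nonneg fun y hy => mul_nonneg
        (by linarith [Finset.inf'_le ρ hy]) (mul_nonneg (sq_nonneg _) (hm y).le)
    linarith
  have hCS : P ^ 2 ≤ D2 * K := by
    have hcs := Finset.sum_mul_sq_le_sq_mul_sq (Bᶜ : Finset V)
      (fun y => ρ y * Real.sqrt (m y)) (fun y => (v y - c) * Real.sqrt (m y))
    have h1 : ∑ y ∈ Bᶜ, (ρ y * Real.sqrt (m y)) * ((v y - c) * Real.sqrt (m y)) = P := by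
      rw [hPdef]
      refine Finset.sum_congr rfl fun y _ => ?_
      have := Real.mul_self_sqrt (hm y).le
      ring_nf
      rw [Real.sq_sqrt (hm y).le]
      ring
    have h2 : ∑ y ∈ Bᶜ, (ρ y * Real.sqrt (m y)) ^ 2 = D2 := by
      rw [hD2def]
      refine Finset.sum_congr rfl fun y _ => ?_
      rw [mul_pow, Real.sq_sqrt (hm y).le]
    have h3 : ∑ y ∈ Bᶜ, ((v y - c) * Real.sqrt (m y)) ^ 2 = K := by
      rw [hKdef]
      refine Finset.sum_congr rfl fun y _ => ?_
      rw [mul_pow, Real.sq_sqrt (hm y).le]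
    rw [h1, h2, h3] at hcs
    exact hcs
  have hμ' : (D - VB * r + (VB + VΩ) / D * D2) * K ≤ (1/2) * I := by
    have hzero : ∑ y ∈ Bᶜ, (v y - c) * m y = 0 := by
      have : ∑ y ∈ Bᶜ, (v y - c) * m y = S1 - c * VΩ := by
        rw [hS1def, hVΩdef, Finset.mul_sum, ← Finset.sum_sub_distrib]
        exact Finset.sum_congr rfl fun y _ => by ring
      rw [this, hcdef]
      ring
    have h := hmu2 (fun y => v y - c) hzero
    have hRHS : ∑ x ∈ Bᶜ, ∑ y ∈ Bᶜ, ((v y - c) - (v x - c)) ^ 2 * w x y = I := by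
      rw [hIdef]
      exact Finset.sum_congr rfl fun x _ => Finset.sum_congr rfl fun y _ => by ring_nf
    rw [hRHS] at h
    exact h
  have hA : ((VB + VΩ) / D * D2) * D = (VB + VΩ) * D2 := by field_simp
  have key : 0 ≤ VB * (Qc - r * K) * (D * (VB + VΩ))
      + (VB + VΩ) ^ 2 * (D2 * K - P ^ 2)
      + ((VB + VΩ) * P + (c - a) * VB * D) ^ 2 := by
    have t1 : 0 ≤ VB * (Qc - r * K) * (D * (VB + VΩ)) :=
      mul_nonneg (mul_nonneg hVB.le (by linarith)) (mul_nonneg hD.le (by linarith))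
    have t2 : 0 ≤ (VB + VΩ) ^ 2 * (D2 * K - P ^ 2) :=
      mul_nonneg (sq_nonneg _) (by linarith)
    linarith [sq_nonneg ((VB + VΩ) * P + (c - a) * VB * D)]
  have expand : (VB * (1 * Qc + (2*(c-a)) * P + (c-a) ^ 2 * D)
        + (D - VB * r + (VB + VΩ) / D * D2) * K
        - D * (a ^ 2 * VB + (K + c ^ 2 * VΩ))) * (D * (VB + VΩ))
      = VB * (Qc - r * K) * (D * (VB + VΩ))
        + (VB + VΩ) ^ 2 * (D2 * K - P ^ 2)
        + ((VB + VΩ) * P + (c - a) * VB * D) ^ 2 := by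
    linear_combination (K * (VB + VΩ)) * hA - (D^2 * (c * VΩ + a * VB)) * hconv
  have hmain : D * (a ^ 2 * VB + T)
      ≤ VB * CΩ + (D - VB * r + (VB + VΩ) / D * D2) * K := by
    rw [hCΩexp, hT']
    have hDVG : (0:ℝ) < D * (VB + VΩ) := mul_pos hD (by linarith)
    have h0 : 0 ≤ (VB * (1 * Qc + (2*(c-a)) * P + (c-a) ^ 2 * D)
        + (D - VB * r + (VB + VΩ) / D * D2) * K
        - D * (a ^ 2 * VB + (K + c ^ 2 * VΩ))) * (D * (VB + VΩ)) := by
      rw [expand]; exact key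
    have h1 := (mul_nonneg_iff_of_pos_right hDVG).mp h0
    linarith
  calc D * ∑ x, v x ^ 2 * m x = D * (a ^ 2 * VB + T) := by rw [htot]
    _ ≤ VB * CΩ + (D - VB * r + (VB + VΩ) / D * D2) * K := hmain
    _ ≤ VB * CΩ + (1/2) * I := by linarith
    _ = (1/2) * ∑ x, ∑ y, (v y - v x) ^ 2 * w x y := by rw [hEsplit]; ring

lemma boundary_value_const {G : SimpleGraph V} {B : Finset V} {ρ : V → ℝ}
    (hW : IsWeight G m w) (hB : IsBoundary G B)
    (hsplit : ∀ x ∈ B, ∀ y, y ∉ B → w x y = ρ y * m x * m y)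
    (f : V → ℝ) (lam : ℝ) (heig : ∀ x ∈ B, - lap m w f x = lam * f x)
    (hlam : lam ≠ ∑ y ∈ Bᶜ, ρ y * m y) :
    ∀ x ∈ B, f x = (∑ y ∈ Bᶜ, f y * (ρ y * m y)) / ((∑ y ∈ Bᶜ, ρ y * m y) - lam) := by
  intro x hx
  have h1 := heig x hx
  rw [lap_boundary hW hB hsplit hx] at h1
  have hne0 : (∑ y ∈ Bᶜ, ρ y * m y) - lam ≠ 0 := sub_ne_zero.mpr (Ne.symm hlam)
  rw [eq_div_iff hne0]
  linear_combination h1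

end Infra



section LinAlg

variable {E : Type*} [NormedAddCommGroup E] [InnerProductSpace ℝ E] [FiniteDimensional ℝ E]
variable {ι : Type*} [Fintype ι]

lemma ortho_card_le (f : ι → E) (h : Orthonormal ℝ f) :
    Fintype.card ι ≤ Module.finrank ℝ E :=
  h.linearIndependent.fintype_card_le_finrank

lemma ortho_card_le_span (f : ι → E) (h : Orthonormal ℝ f) (s : Finset E)
    (hmem : ∀ i, f i ∈ Submodule.span ℝ (s : Set E)) :
    Fintype.card ι ≤ s.card := by
  set W := Submodule.span ℝ (s : Set E) with hW
  let g : ι → W := fun i => ⟨f i, hmem i⟩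
  have hg : LinearIndependent ℝ g := by
    apply LinearIndependent.of_comp W.subtype
    exact h.linearIndependent
  calc Fintype.card ι ≤ Module.finrank ℝ W := hg.fintype_card_le_finrank
    _ ≤ s.card := finrank_span_finset_le_card s

end LinAlg

section Euclid

variable {V : Type*} [Fintype V] [DecidableEq V]

noncomputable def toE (m : V → ℝ) (f : V → ℝ) : EuclideanSpace ℝ V :=
  WithLp.toLp 2 (fun z => f z * Real.sqrt (m z))

lemma inner_toE (m : V → ℝ) (hm : ∀ x, 0 < m x) (f g : V → ℝ) :
    (inner ℝ (toE m f) (toE m g) : ℝ) = ∑ x, f x * g x * m x := by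
  rw [PiLp.inner_apply]
  refine Finset.sum_congr rfl fun x _ => ?_
  simp only [toE, PiLp.toLp_apply, RCLike.inner_apply, conj_trivial]
  have : Real.sqrt (m x) * Real.sqrt (m x) = m x := Real.mul_self_sqrt (hm x).le
  ring_nf
  rw [Real.sq_sqrt (hm x).le]
  ring

noncomputable def toEB (m : V → ℝ) (B : Finset V) (f : V → ℝ) :
    EuclideanSpace ℝ {x // x ∈ B} :=
  WithLp.toLp 2 (fun z : {x // x ∈ B} => f z.1 * Real.sqrt (m z.1))

lemma inner_toEB (m : V → ℝ) (B : Finset V) (hm : ∀ x, 0 < m x) (f g : V → ℝ) :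
    (inner ℝ (toEB m B f) (toEB m B g) : ℝ) = ∑ x ∈ B, f x * g x * m x := by
  rw [PiLp.inner_apply]
  rw [← Finset.sum_coe_sort B (fun x => f x * g x * m x)]
  refine Finset.sum_congr rfl fun x _ => ?_
  simp only [toEB, PiLp.toLp_apply, RCLike.inner_apply, conj_trivial]
  ring_nf
  rw [Real.sq_sqrt (hm x.1).le]
  ring

end Euclid




/-- If `w_{xy} = ρ_y m_x m_y` for all `x ∈ B`, `y ∈ Ω` with `ρ ≥ 0` on
`Ω = V \ B`, and the second Laplacian eigenvalue of the induced weighted graph on `Ω`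
satisfies `μ₂(Ω) ≥ Deg - V_B ρ_min + (V_G/Deg)⟨ρ,ρ⟩_Ω`, then `σ_i = μ_i` for all
`i = 1,…,|B|`. -/
theorem sufficient_condition_for_equality
    {V : Type*} [Fintype V] [DecidableEq V]
    (G : SimpleGraph V) (m : V → ℝ) (w : V → V → ℝ) (B : Finset V)
    (hG : G.Connected) (hW : IsWeight G m w) (hB : IsBoundary G B)
    (μ : Fin (Fintype.card V) → ℝ) (hμ : IsLapSpectrum m w μ)
    (σ : Fin B.card → ℝ) (hσ : IsSteklovSpectrum m w B σ)
    (ρ : V → ℝ) (hρ : ∀ y, y ∉ B → 0 ≤ ρ y)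
    (hsplit : ∀ x ∈ B, ∀ y, y ∉ B → w x y = ρ y * m x * m y)
    (hne : (Bᶜ : Finset V).Nonempty)
    (hmu2 : Mu2LB m w Bᶜ
      ((∑ y ∈ Bᶜ, ρ y * m y) - (∑ x ∈ B, m x) * ((Bᶜ : Finset V).inf' hne ρ)
        + (((∑ x ∈ B, m x) + ∑ y ∈ Bᶜ, m y) / (∑ y ∈ Bᶜ, ρ y * m y))
            * (∑ y ∈ Bᶜ, ρ y ^ 2 * m y))) :
    ∀ i : Fin B.card, σ i = μ (Fin.castLE (Finset.card_le_univ B) i) := by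
  classical
  obtain ⟨hμmono, v, hveq, hvorth⟩ := hμ
  obtain ⟨hσmono, u, huharm, hueq, huorth⟩ := hσ
  intro i
  have hm := hW.1
  have hws := hW.2.1
  have hBne : B.Nonempty := Finset.card_pos.mp i.pos
  set D : ℝ := ∑ y ∈ Bᶜ, ρ y * m y with hDdef
  have hVB : 0 < ∑ x ∈ B, m x := Finset.sum_pos (fun x _ => hm x) hBne
  have hVG : 0 < ∑ x, m x := Finset.sum_pos (fun x _ => hm x) ⟨hBne.choose, Finset.mem_univ _⟩
  have hD : 0 < D := by
    obtain ⟨x0, hx0⟩ := hBne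
    obtain ⟨y0, hy0B, hadj⟩ := hB.2 x0 hx0
    have hw0 : 0 < w x0 y0 := hW.2.2.1 _ _ hadj
    have heq := hsplit x0 hx0 y0 hy0B
    have hρy0 : 0 < ρ y0 := by
      rcases lt_or_eq_of_le (hρ y0 hy0B) with h | h
      · exact h
      · rw [heq, ← h] at hw0; simp at hw0
    refine Finset.sum_pos' (fun y hy => mul_nonneg (hρ y (Finset.mem_compl.mp hy)) (hm y).le) ?_
    exact ⟨y0, Finset.mem_compl.mpr hy0B, mul_pos hρy0 (hm y0)⟩
  -- ===================== Steklov side =====================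
  have hsumB : ∀ j, σ j * (∑ x ∈ B, u j x * m x) = 0 := by
    intro j
    have t0 := sum_lap_zero hm hws (u j)
    rw [← Finset.sum_add_sum_compl B (fun x => lap m w (u j) x * m x)] at t0
    have t1 : ∑ x ∈ Bᶜ, lap m w (u j) x * m x = 0 :=
      Finset.sum_eq_zero fun x hx => by rw [huharm j x (Finset.mem_compl.mp hx)]; ring
    have t2 : ∑ x ∈ B, lap m w (u j) x * m x = 0 := by linarith
    calc σ j * ∑ x ∈ B, u j x * m x = ∑ x ∈ B, σ j * u j x * m x := by
          rw [Finset.mul_sum]; exact Finset.sum_congr rfl fun x _ => by ring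
      _ = ∑ x ∈ B, (- lap m w (u j) x) * m x :=
          Finset.sum_congr rfl fun x hx => by rw [← hueq j x hx]
      _ = - ∑ x ∈ B, lap m w (u j) x * m x := by
          rw [← Finset.sum_neg_distrib]
          exact Finset.sum_congr rfl fun x _ => by ring
      _ = 0 := by rw [t2]; ring
  have hconst : ∀ j, σ j ≠ D → ∃ t : ℝ, (∀ z, u j z = t) ∧ t ≠ 0 ∧ σ j = 0 := by
    intro j hj
    set t := (∑ y ∈ Bᶜ, u j y * (ρ y * m y)) / (D - σ j) with htdef
    have hbdt : ∀ x ∈ B, u j x = t :=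
      boundary_value_const hW hB hsplit (u j) (σ j) (fun x hx => hueq j x hx) hj
    have hall : ∀ z, u j z = t := harmonic_const hG hW hBne (u j) (huharm j) t hbdt
    have hnorm : iprodOn m B (u j) (u j) = 1 := by simpa using huorth j j
    have ht0 : t ≠ 0 := by
      intro h0
      rw [iprodOn] at hnorm
      have hz : ∑ x ∈ B, u j x * u j x * m x = 0 :=
        Finset.sum_eq_zero fun x _ => by rw [hall x, h0]; ring
      rw [hz] at hnorm
      norm_num at hnorm
    have hσ0 : σ j = 0 := by
      obtain ⟨x0, hx0⟩ := hBne
      have h1 := hueq j x0 hx0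
      have hlapz : lap m w (u j) x0 = 0 := by
        have hfun : u j = fun _ => t := funext hall
        rw [hfun]; exact lap_const_zero m w t x0
      rw [hlapz, hall x0] at h1
      rcases mul_eq_zero.mp (by linarith : σ j * t = 0) with h | h
      · exact h
      · exact absurd h ht0
    exact ⟨t, hall, ht0, hσ0⟩
  have huniq : ∀ j k, j ≠ k → σ j ≠ D → σ k ≠ D → False := by
    intro j k hjk hj hk
    obtain ⟨tj, haj, htj, _⟩ := hconst j hj
    obtain ⟨tk, hak, htk, _⟩ := hconst k hk
    have h0 : iprodOn m B (u j) (u k) = 0 := by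
      have := huorth j k
      rw [if_neg hjk] at this
      exact this
    rw [iprodOn] at h0
    have heqs : ∑ x ∈ B, u j x * u k x * m x = tj * tk * ∑ x ∈ B, m x := by
      rw [Finset.mul_sum]
      exact Finset.sum_congr rfl fun x _ => by rw [haj x, hak x]
    rw [heqs] at h0
    exact (mul_ne_zero (mul_ne_zero htj htk) hVB.ne') h0
  have hexzero : ∃ j, σ j = 0 := by
    by_contra hno
    push_neg at hno
    have hperp : ∀ j, ∑ x ∈ B, u j x * m x = 0 := by
      intro j
      rcases mul_eq_zero.mp (hsumB j) with h | h
      · exact absurd h (hno j)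
      · exact h
    let F : Option (Fin B.card) → EuclideanSpace ℝ {x // x ∈ B} :=
      fun o => Option.rec (toEB m B (fun _ => 1 / Real.sqrt (∑ x ∈ B, m x)))
        (fun j => toEB m B (u j)) o
    have hOF : Orthonormal ℝ F := by
      rw [orthonormal_iff_ite]
      intro o p
      have hsq : Real.sqrt (∑ x ∈ B, m x) ^ 2 = ∑ x ∈ B, m x := Real.sq_sqrt hVB.le
      cases o with
      | none => cases p with
        | none =>
          have hcalc : (inner ℝ (F none) (F none) : ℝ) = 1 := by
            show (inner ℝ (toEB m B (fun _ => 1 / Real.sqrt (∑ x ∈ B, m x)))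
              (toEB m B (fun _ => 1 / Real.sqrt (∑ x ∈ B, m x))) : ℝ) = 1
            rw [inner_toEB m B hm]
            have hss : Real.sqrt (∑ x ∈ B, m x) * Real.sqrt (∑ x ∈ B, m x) = ∑ x ∈ B, m x :=
              Real.mul_self_sqrt hVB.le
            have hstep : ∀ x ∈ B, (1 / Real.sqrt (∑ x ∈ B, m x)) * (1 / Real.sqrt (∑ x ∈ B, m x)) * m x
                = m x * (1 / (∑ x ∈ B, m x)) := by
              intro x _
              rw [div_mul_div_comm, one_mul, hss]
              ring
            rw [Finset.sum_congr rfl hstep, ← Finset.sum_mul]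
            field_simp
          rw [hcalc]
          simp
        | some k =>
          have hcalc : (inner ℝ (F none) (F (some k)) : ℝ) = 0 := by
            show (inner ℝ (toEB m B (fun _ => 1 / Real.sqrt (∑ x ∈ B, m x)))
              (toEB m B (u k)) : ℝ) = 0
            rw [inner_toEB m B hm]
            have : ∑ x ∈ B, (1 / Real.sqrt (∑ x ∈ B, m x)) * u k x * m x
                = (1 / Real.sqrt (∑ x ∈ B, m x)) * ∑ x ∈ B, u k x * m x := by
              rw [Finset.mul_sum]
              exact Finset.sum_congr rfl fun x _ => by ring
            rw [this, hperp k, mul_zero]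
          rw [hcalc]
          simp
      | some j => cases p with
        | none =>
          have hcalc : (inner ℝ (F (some j)) (F none) : ℝ) = 0 := by
            show (inner ℝ (toEB m B (u j))
              (toEB m B (fun _ => 1 / Real.sqrt (∑ x ∈ B, m x))) : ℝ) = 0
            rw [inner_toEB m B hm]
            have : ∑ x ∈ B, u j x * (1 / Real.sqrt (∑ x ∈ B, m x)) * m x
                = (1 / Real.sqrt (∑ x ∈ B, m x)) * ∑ x ∈ B, u j x * m x := by
              rw [Finset.mul_sum]
              exact Finset.sum_congr rfl fun x _ => by ring
            rw [this, hperp j, mul_zero]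
          rw [hcalc]
          simp
        | some k =>
          have hcalc : (inner ℝ (F (some j)) (F (some k)) : ℝ) = if j = k then 1 else 0 := by
            show (inner ℝ (toEB m B (u j)) (toEB m B (u k)) : ℝ) = _
            rw [inner_toEB m B hm]
            have := huorth j k
            rw [iprodOn] at this
            exact this
          rw [hcalc]
          by_cases h : j = k
          · rw [if_pos h, h, if_pos rfl]
          · rw [if_neg h, if_neg (by simp [h])]
    have hcard := ortho_card_le F hOF
    rw [finrank_euclideanSpace] at hcard
    simp only [Fintype.card_option, Fintype.card_fin, Fintype.card_coe] at hcard
    omega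
  have hσval : ∀ j : Fin B.card, σ j = if j.val = 0 then 0 else D := by
    obtain ⟨j0, hj0⟩ := hexzero
    have hj0D : σ j0 ≠ D := by rw [hj0]; exact hD.ne
    have hother : ∀ j, j ≠ j0 → σ j = D := by
      intro j hj
      by_contra hne'
      exact huniq j j0 hj hne' hj0D
    have hj00 : j0.val = 0 := by
      by_contra h
      have hz : (⟨0, i.pos⟩ : Fin B.card) ≠ j0 := by
        intro he
        exact h (by rw [← he])
      have h1 : σ ⟨0, i.pos⟩ = D := hother _ hz
      have h2 : (⟨0, i.pos⟩ : Fin B.card) ≤ j0 := by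
        exact Fin.le_def.mpr (Nat.zero_le _)
      have := hσmono h2
      rw [h1, hj0] at this
      linarith
    intro j
    by_cases hj : j.val = 0
    · have : j = j0 := Fin.ext (by omega)
      rw [if_pos hj, this, hj0]
    · rw [if_neg hj]
      exact hother j (fun h => hj (by rw [h, hj00]))
  -- ===================== Laplacian side =====================
  have hEv : ∀ k, ∑ x, (- lap m w (v k) x) * v k x * m x = μ k := by
    intro k
    have h1 : ∑ x, (- lap m w (v k) x) * v k x * m x = μ k * ∑ x, v k x * v k x * m x := by
      rw [Finset.mul_sum]
      exact Finset.sum_congr rfl fun x _ => by rw [hveq k x]; ring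
    have h2 := hvorth k k
    rw [if_pos rfl, iprod] at h2
    rw [h1, h2, mul_one]
  have hμnn : ∀ k, 0 ≤ μ k := by
    intro k
    rw [← hEv k, energy_eq hm hws]
    have : 0 ≤ ∑ x, ∑ y, (v k y - v k x) ^ 2 * w x y :=
      Finset.sum_nonneg fun x _ => Finset.sum_nonneg fun y _ =>
        mul_nonneg (sq_nonneg _) (w_nonneg hW x y)
    linarith
  have hμsum1 : ∀ k, μ k * (∑ x, v k x * m x) = 0 := by
    intro k
    have t0 := sum_lap_zero hm hws (v k)
    calc μ k * ∑ x, v k x * m x = ∑ x, μ k * v k x * m x := by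
          rw [Finset.mul_sum]; exact Finset.sum_congr rfl fun x _ => by ring
      _ = ∑ x, (- lap m w (v k) x) * m x :=
          Finset.sum_congr rfl fun x _ => by rw [← hveq k x]
      _ = - ∑ x, lap m w (v k) x * m x := by
          rw [← Finset.sum_neg_distrib]
          exact Finset.sum_congr rfl fun x _ => by ring
      _ = 0 := by rw [t0]; ring
  have hμconst : ∀ k, μ k = 0 → ∃ t : ℝ, t ≠ 0 ∧ ∀ z, v k z = t := by
    intro k hk
    have hE0 : ∑ x, ∑ y, (v k y - v k x) ^ 2 * w x y = 0 := by
      have h1 := hEv k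
      rw [energy_eq hm hws, hk] at h1
      linarith
    have hcc := const_of_energy_zero hG hW (v k) hE0
    obtain ⟨x0, _⟩ := hBne
    refine ⟨v k x0, ?_, fun z => hcc z x0⟩
    intro h0
    have h2 := hvorth k k
    rw [if_pos rfl, iprod] at h2
    have hz : ∑ x, v k x * v k x * m x = 0 :=
      Finset.sum_eq_zero fun x _ => by rw [hcc x x0, h0]; ring
    rw [hz] at h2
    norm_num at h2
  have hμuniq : ∀ j k, j ≠ k → μ j = 0 → μ k = 0 → False := by
    intro j k hjk hj hk
    obtain ⟨tj, htj, haj⟩ := hμconst j hj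
    obtain ⟨tk, htk, hak⟩ := hμconst k hk
    have h0 := hvorth j k
    rw [if_neg hjk, iprod] at h0
    have heqs : ∑ x, v j x * v k x * m x = tj * tk * ∑ x, m x := by
      rw [Finset.mul_sum]
      exact Finset.sum_congr rfl fun x _ => by rw [haj x, hak x]
    rw [heqs] at h0
    exact (mul_ne_zero (mul_ne_zero htj htk) hVG.ne') h0
  have hμex : ∃ k, μ k = 0 := by
    by_contra hno
    push_neg at hno
    have hperp : ∀ k, ∑ x, v k x * m x = 0 := by
      intro k
      rcases mul_eq_zero.mp (hμsum1 k) with h | h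
      · exact absurd h (hno k)
      · exact h
    let F : Option (Fin (Fintype.card V)) → EuclideanSpace ℝ V :=
      fun o => Option.rec (toE m (fun _ => 1 / Real.sqrt (∑ x, m x)))
        (fun k => toE m (v k)) o
    have hOF : Orthonormal ℝ F := by
      rw [orthonormal_iff_ite]
      intro o p
      cases o with
      | none => cases p with
        | none =>
          have hcalc : (inner ℝ (F none) (F none) : ℝ) = 1 := by
            show (inner ℝ (toE m (fun _ => 1 / Real.sqrt (∑ x, m x)))
              (toE m (fun _ => 1 / Real.sqrt (∑ x, m x))) : ℝ) = 1
            rw [inner_toE m hm]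
            have hss : Real.sqrt (∑ x, m x) * Real.sqrt (∑ x, m x) = ∑ x, m x :=
              Real.mul_self_sqrt hVG.le
            have hstep : ∀ x ∈ (univ : Finset V), (1 / Real.sqrt (∑ x, m x)) * (1 / Real.sqrt (∑ x, m x)) * m x
                = m x * (1 / (∑ x, m x)) := by
              intro x _
              rw [div_mul_div_comm, one_mul, hss]
              ring
            rw [Finset.sum_congr rfl hstep, ← Finset.sum_mul]
            field_simp
          rw [hcalc]
          simp
        | some k =>
          have hcalc : (inner ℝ (F none) (F (some k)) : ℝ) = 0 := by
            show (inner ℝ (toE m (fun _ => 1 / Real.sqrt (∑ x, m x))) (toE m (v k)) : ℝ) = 0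
            rw [inner_toE m hm]
            have : ∑ x, (1 / Real.sqrt (∑ x, m x)) * v k x * m x
                = (1 / Real.sqrt (∑ x, m x)) * ∑ x, v k x * m x := by
              rw [Finset.mul_sum]
              exact Finset.sum_congr rfl fun x _ => by ring
            rw [this, hperp k, mul_zero]
          rw [hcalc]
          simp
      | some j => cases p with
        | none =>
          have hcalc : (inner ℝ (F (some j)) (F none) : ℝ) = 0 := by
            show (inner ℝ (toE m (v j)) (toE m (fun _ => 1 / Real.sqrt (∑ x, m x))) : ℝ) = 0
            rw [inner_toE m hm]
            have : ∑ x, v j x * (1 / Real.sqrt (∑ x, m x)) * m x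
                = (1 / Real.sqrt (∑ x, m x)) * ∑ x, v j x * m x := by
              rw [Finset.mul_sum]
              exact Finset.sum_congr rfl fun x _ => by ring
            rw [this, hperp j, mul_zero]
          rw [hcalc]
          simp
        | some k =>
          have hcalc : (inner ℝ (F (some j)) (F (some k)) : ℝ) = if j = k then 1 else 0 := by
            show (inner ℝ (toE m (v j)) (toE m (v k)) : ℝ) = _
            rw [inner_toE m hm]
            have := hvorth j k
            rw [iprod] at this
            exact this
          rw [hcalc]
          by_cases h : j = k
          · rw [if_pos h, h, if_pos rfl]
          · rw [if_neg h, if_neg (by simp [h])]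
    have hcard := ortho_card_le F hOF
    rw [finrank_euclideanSpace] at hcard
    simp only [Fintype.card_option, Fintype.card_fin] at hcard
    omega
  have hdich : ∀ k, μ k = 0 ∨ D ≤ μ k := by
    intro k
    by_cases h0 : μ k = 0
    · exact Or.inl h0
    right
    by_cases hDk : μ k = D
    · rw [hDk]
    have hperp : ∑ x, v k x * m x = 0 := by
      rcases mul_eq_zero.mp (hμsum1 k) with h | h
      · exact absurd h h0
      · exact h
    have hva := boundary_value_const hW hB hsplit (v k) (μ k)
      (fun x hx => hveq k x) (fun h => hDk h)
    have hray := rayleigh hW hB hρ hsplit hne hBne hmu2 (v k)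
      ((∑ y ∈ Bᶜ, v k y * (ρ y * m y)) / (D - μ k)) hva hperp
    have hsq : ∑ x, v k x ^ 2 * m x = 1 := by
      have h2 := hvorth k k
      rw [if_pos rfl, iprod] at h2
      rw [← h2]
      exact Finset.sum_congr rfl fun x _ => by ring
    have hEk : (1/2) * ∑ x, ∑ y, (v k y - v k x) ^ 2 * w x y = μ k := by
      rw [← energy_eq hm hws, hEv k]
    rw [hsq, hEk, mul_one] at hray
    exact hray
  have hμzero_unique : ∀ k : Fin (Fintype.card V), k.val ≠ 0 → D ≤ μ k := by
    intro k hk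
    rcases hdich k with h | h
    · exfalso
      have hn0 : 0 < Fintype.card V := k.pos
      have hz : μ ⟨0, hn0⟩ = 0 := by
        have h1 := hμmono (show (⟨0, hn0⟩ : Fin (Fintype.card V)) ≤ k from
          Fin.le_def.mpr (Nat.zero_le _))
        rw [h] at h1
        exact le_antisymm h1 (hμnn _)
      have hne2 : (⟨0, hn0⟩ : Fin (Fintype.card V)) ≠ k := by
        intro hee
        exact hk (by rw [← hee])
      exact hμuniq _ _ hne2 hz h
    · exact h
  have hμ0 : ∀ hn0 : 0 < Fintype.card V, μ ⟨0, hn0⟩ = 0 := by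
    intro hn0
    obtain ⟨k0, hk0⟩ := hμex
    have hle : (⟨0, hn0⟩ : Fin (Fintype.card V)) ≤ k0 := Fin.le_def.mpr (Nat.zero_le _)
    have h1 := hμmono hle
    rw [hk0] at h1
    exact le_antisymm h1 (hμnn _)
  have hupper : ∀ k : Fin (Fintype.card V), 1 ≤ k.val → k.val ≤ B.card - 1 → μ k ≤ D := by
    intro k hk1 hk2
    have hBc2 : 2 ≤ B.card := by
      have := i.isLt
      omega
    by_contra hgt
    push_neg at hgt
    have hσD : ∀ j : Fin B.card, 1 ≤ j.val → σ j = D := fun j hj => by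
      rw [hσval j, if_neg (by omega)]
    have huperp : ∀ j : Fin B.card, 1 ≤ j.val → ∑ x ∈ B, u j x * m x = 0 := by
      intro j hj
      have hsB := hsumB j
      rw [hσD j hj] at hsB
      rcases mul_eq_zero.mp hsB with h | h
      · exact absurd h hD.ne'
      · exact h
    set g : Fin B.card → V → ℝ := fun j z => if z ∈ B then u j z else 0 with hgdef
    have hglap : ∀ j : Fin B.card, 1 ≤ j.val → ∀ z, - lap m w (g j) z = D * g j z := by
      intro j hj z
      by_cases hz : z ∈ B
      · have hl := lap_boundary hW hB hsplit hz (g j)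
        have hzero : ∑ y ∈ Bᶜ, g j y * (ρ y * m y) = 0 :=
          Finset.sum_eq_zero fun y hy => by
            simp only [hgdef, if_neg (Finset.mem_compl.mp hy)]; ring
        rw [hl, hzero]
        simp only [hgdef, if_pos hz]
        ring
      · have hgz : g j z = 0 := by simp only [hgdef, if_neg hz]
        have hl : lap m w (g j) z = (1 / m z) * ∑ y, (g j y - g j z) * w z y := rfl
        have hsum0 : ∑ y, (g j y - g j z) * w z y = 0 := by
          rw [← Finset.sum_add_sum_compl B (fun y => (g j y - g j z) * w z y)]
          have hA : ∑ y ∈ B, (g j y - g j z) * w z y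
              = (ρ z * m z) * ∑ y ∈ B, u j y * m y := by
            rw [Finset.mul_sum]
            refine Finset.sum_congr rfl fun y hy => ?_
            rw [hgz]
            simp only [hgdef, if_pos hy]
            rw [hws z y, hsplit y hy z hz]
            ring
          have hC : ∑ y ∈ Bᶜ, (g j y - g j z) * w z y = 0 :=
            Finset.sum_eq_zero fun y hy => by
              rw [hgz]
              simp only [hgdef, if_neg (Finset.mem_compl.mp hy)]
              ring
          rw [hA, hC, huperp j hj]
          ring
        rw [hl, hsum0, hgz]
        ring
    have hgorth : ∀ j k' : Fin B.card, iprod m (g j) (g k') = if j = k' then 1 else 0 := by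
      intro j k'
      rw [iprod, ← Finset.sum_add_sum_compl B (fun x => g j x * g k' x * m x)]
      have h1 : ∑ x ∈ B, g j x * g k' x * m x = iprodOn m B (u j) (u k') := by
        rw [iprodOn]
        exact Finset.sum_congr rfl fun x hx => by simp only [hgdef, if_pos hx]
      have h2 : ∑ x ∈ Bᶜ, g j x * g k' x * m x = 0 :=
        Finset.sum_eq_zero fun x hx => by
          simp only [hgdef, if_neg (Finset.mem_compl.mp hx)]; ring
      rw [h1, h2, huorth j k', add_zero]
    have hgperp : ∀ (j : Fin B.card), 1 ≤ j.val → ∀ kk : Fin (Fintype.card V), μ kk ≠ D →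
        ∑ x, g j x * v kk x * m x = 0 := by
      intro j hj kk hkk
      have hsa := selfadj hm hws (g j) (v kk)
      have hl : ∑ x, (- lap m w (g j) x) * v kk x * m x
          = D * ∑ x, g j x * v kk x * m x := by
        rw [Finset.mul_sum]
        exact Finset.sum_congr rfl fun x _ => by rw [hglap j hj x]; ring
      have hr : ∑ x, (- lap m w (v kk) x) * g j x * m x
          = μ kk * ∑ x, g j x * v kk x * m x := by
        rw [Finset.mul_sum]
        exact Finset.sum_congr rfl fun x _ => by rw [hveq kk x]; ring
      rw [hl, hr] at hsa
      rcases mul_eq_zero.mp (by linarith : (D - μ kk) * ∑ x, g j x * v kk x * m x = 0) with h | h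
      · exact absurd (by linarith : μ kk = D) hkk
      · exact h
    have hOTv : Orthonormal ℝ (fun kk => toE m (v kk)) := by
      rw [orthonormal_iff_ite]
      intro j' k'
      rw [inner_toE m hm]
      have h2 := hvorth j' k'
      rw [iprod] at h2
      exact h2
    have hnn : Nonempty (Fin (Fintype.card V)) := ⟨k⟩
    have htop := hOTv.linearIndependent.span_eq_top_of_card_eq_finrank
      (by rw [Fintype.card_fin, finrank_euclideanSpace])
    set J : Finset (Fin (Fintype.card V)) := Finset.univ.filter (fun kk => μ kk = D) with hJdef
    have hJbound : J.card ≤ B.card - 2 := by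
      have hsub : J.image Fin.val ⊆ Finset.Ico 1 (B.card - 1) := by
        intro n hn
        obtain ⟨kk, hkkJ, hkkval⟩ := Finset.mem_image.mp hn
        have hkkD : μ kk = D := (Finset.mem_filter.mp hkkJ).2
        have h1 : kk.val ≠ 0 := by
          intro h0
          have hkk0 : μ kk = 0 := by
            have hμz := hμ0 kk.pos
            have hke : kk = ⟨0, kk.pos⟩ := Fin.ext h0
            rw [hke]
            exact hμz
          rw [hkk0] at hkkD
          exact hD.ne hkkD
        have h2 : kk.val < k.val := by
          by_contra hge
          push_neg at hge
          have hmn := hμmono (Fin.le_def.mpr hge)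
          rw [hkkD] at hmn
          linarith
        rw [Finset.mem_Ico, ← hkkval]
        omega
      have h3 : (J.image Fin.val).card = J.card :=
        Finset.card_image_of_injective J Fin.val_injective
      have h4 := Finset.card_le_card hsub
      rw [h3, Nat.card_Ico] at h4
      omega
    have hmem : ∀ (j : Fin B.card), 1 ≤ j.val →
        toE m (g j) ∈ Submodule.span ℝ
          ((J.image (fun kk => toE m (v kk)) : Finset (EuclideanSpace ℝ V)) :
            Set (EuclideanSpace ℝ V)) := by
      intro j hj
      have hmem_top : toE m (g j) ∈ Submodule.span ℝ (Set.range (fun kk => toE m (v kk))) := by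
        rw [htop]; trivial
      obtain ⟨d, hd⟩ := (Submodule.mem_span_range_iff_exists_fun ℝ).mp hmem_top
      have hdz : ∀ kk, μ kk ≠ D → d kk = 0 := by
        intro kk hkk
        have hir := hOTv.inner_right_fintype d kk
        rw [hd, inner_toE m hm] at hir
        have hz : ∑ x, v kk x * g j x * m x = 0 := by
          rw [← hgperp j hj kk hkk]
          exact Finset.sum_congr rfl fun x _ => by ring
        rw [hz] at hir
        exact hir.symm
      rw [← hd]
      rw [← Finset.sum_filter_add_sum_filter_not Finset.univ (fun kk => μ kk = D)
        (fun kk => d kk • toE m (v kk))]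
      have hz2 : ∑ kk ∈ Finset.univ.filter (fun kk => ¬ μ kk = D),
          d kk • toE m (v kk) = 0 :=
        Finset.sum_eq_zero fun kk hkk => by
          rw [hdz kk (Finset.mem_filter.mp hkk).2, zero_smul]
      rw [hz2, add_zero]
      refine Submodule.sum_mem _ fun kk hkk => ?_
      exact Submodule.smul_mem _ _ (Submodule.subset_span
        (Finset.mem_coe.mpr (Finset.mem_image_of_mem _ hkk)))
    have hfam : Orthonormal ℝ (fun jj : Fin (B.card - 1) =>
        toE m (g ⟨jj.val + 1, by omega⟩)) := by
      rw [orthonormal_iff_ite]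
      intro jj kk'
      rw [inner_toE m hm]
      have hgo := hgorth ⟨jj.val + 1, by omega⟩ ⟨kk'.val + 1, by omega⟩
      rw [iprod] at hgo
      rw [hgo]
      by_cases h : jj = kk'
      · rw [if_pos (by rw [h]), if_pos h]
      · rw [if_neg (fun hc => h (Fin.ext (by
          have hcv := congrArg Fin.val hc
          simpa using hcv))), if_neg h]
    have hsize := ortho_card_le_span _ hfam (J.image (fun kk => toE m (v kk)))
      (fun jj => hmem _ (Nat.succ_le_succ (Nat.zero_le _)))
    rw [Fintype.card_fin] at hsize
    have himg := Finset.card_image_le (s := J) (f := fun kk => toE m (v kk))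
    omega
  -- conclusion
  rw [hσval i]
  by_cases hi0 : i.val = 0
  · rw [if_pos hi0]
    have hn0 : 0 < Fintype.card V := (Fin.castLE (Finset.card_le_univ B) i).pos
    have hcast : Fin.castLE (Finset.card_le_univ B) i = ⟨0, hn0⟩ := Fin.ext hi0
    rw [hcast, hμ0 hn0]
  · rw [if_neg hi0]
    have hk1 : 1 ≤ (Fin.castLE (Finset.card_le_univ B) i).val := by
      show 1 ≤ i.val
      omega
    have hk2 : (Fin.castLE (Finset.card_le_univ B) i).val ≤ B.card - 1 := by
      show i.val ≤ B.card - 1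
      have := i.isLt
      omega
    have hle := hupper _ hk1 hk2
    have hge := hμzero_unique (Fin.castLE (Finset.card_le_univ B) i) (by
      show i.val ≠ 0
      exact hi0)
    linarith



end GraphSteklov
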